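/- Let H be an N×N Hadamard matrix whose first row and first column are constant 1/√N. If H is equivalent to the standard N×N Hadamard matrix, then H is permutation equivalent to the standard Hadamard matrix, i.e., there exist permutations π, ρ of the index set such that H_{i,j} equals the (π(i), ρ(j)) entry of the standard Hadamard matrix for all i, j. -/

import Mathlib

open Matrix
open scoped ComplexConjugate

/-- An `N × N` complex matrix is a Hadamard matrix if it is unitary and all its entries have
absolute value `1/√N`. -/
def IsHadamardMatrix {N : ℕ} (H : Matrix (Fin N) (Fin N) ℂ) : Prop :=
  H ∈ Matrix.unitaryGroup (Fin N) ℂ ∧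
    ∀ i j, ‖H i j‖ = 1 / Real.sqrt N

/-- Two Hadamard matrices are equivalent: `H' i j = cᵢ dⱼ H (π i) (ρ j)` for permutations
`π, ρ` and unimodular constants `cᵢ, dⱼ`. -/
def HadamardEquivalent {N : ℕ} (H H' : Matrix (Fin N) (Fin N) ℂ) : Prop :=
  ∃ (π ρ : Equiv.Perm (Fin N)) (c d : Fin N → ℂ),
    (∀ i, ‖c i‖ = 1) ∧ (∀ j, ‖d j‖ = 1) ∧
    ∀ i j, H' i j = c i * d j * H (π i) (ρ j)

/-- The standard `N × N` Hadamard matrix `(1/√N)(e^{2πi jk/N})`. -/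
noncomputable def stdHadamard (N : ℕ) : Matrix (Fin N) (Fin N) ℂ :=
  fun j k => ((1 / Real.sqrt N : ℝ) : ℂ) *
    Complex.exp (2 * (Real.pi : ℂ) * Complex.I * (j : ℕ) * (k : ℕ) / (N : ℂ))

/- auxiliary -/
noncomputable def auxE (N : ℕ) (m : ℤ) : ℂ :=
  Complex.exp (2 * (Real.pi : ℂ) * Complex.I * m / N)

lemma auxE_add (N : ℕ) (m n : ℤ) : auxE N (m + n) = auxE N m * auxE N n := by
  unfold auxE
  rw [← Complex.exp_add]
  congr 1
  push_cast
  ring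

lemma auxE_zero (N : ℕ) : auxE N 0 = 1 := by simp [auxE]

lemma auxE_mul_neg (N : ℕ) (m : ℤ) : auxE N m * auxE N (-m) = 1 := by
  rw [← auxE_add]; simp [auxE_zero]

lemma auxE_congr (N : ℕ) [NeZero N] {m n : ℤ} (h : m ≡ n [ZMOD N]) :
    auxE N m = auxE N n := by
  rw [Int.modEq_iff_dvd] at h
  obtain ⟨k, hk⟩ := h
  have hn : n = m + N * k := by linarith [hk]
  have hN : (N : ℂ) ≠ 0 := Nat.cast_ne_zero.mpr (NeZero.ne N)
  rw [hn, auxE_add]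
  have : auxE N (N * k) = 1 := by
    unfold auxE
    push_cast
    have h4 : 2 * (Real.pi : ℂ) * Complex.I * ((N : ℂ) * (k : ℂ)) / N
        = (k : ℂ) * (2 * Real.pi * Complex.I) := by
      field_simp
    rw [h4, Complex.exp_int_mul_two_pi_mul_I]
  rw [this, mul_one]

lemma stdHadamard_eq (N : ℕ) (a b : Fin N) :
    stdHadamard N a b = ((1 / Real.sqrt N : ℝ) : ℂ) * auxE N ((a.val : ℤ) * b.val) := by
  unfold stdHadamard auxE
  congr 2
  push_cast
  ring

lemma fin_sub_modEq (N : ℕ) [NeZero N] (a b : Fin N) :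
    ((a - b : Fin N).val : ℤ) ≡ (a.val : ℤ) - b.val [ZMOD N] := by
  have h : ((a - b : Fin N).val : ℤ) = (((N - b.val + a.val) % N : ℕ) : ℤ) := by rw [Fin.sub_def]
  have hb := b.isLt
  have h1 : ((N : ℤ) - b.val + a.val) % N ≡ ((N : ℤ) - b.val + a.val) [ZMOD N] :=
    Int.emod_emod_of_dvd _ dvd_rfl
  have h2 : ((N : ℤ) - b.val + a.val) ≡ (a.val : ℤ) - b.val [ZMOD N] := by
    rw [Int.modEq_iff_dvd]
    exact ⟨-1, by ring⟩
  rw [h]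
  push_cast [Int.natCast_mod, Nat.cast_sub hb.le]
  exact h1.trans h2

/-- A Hadamard matrix whose first row and column are constant `1/√N` and
which is equivalent to the standard Hadamard matrix is permutation equivalent to it. -/
theorem equiv_std_implies_perm_equiv (N : ℕ) [NeZero N] (H : Matrix (Fin N) (Fin N) ℂ)
    (hH : IsHadamardMatrix H)
    (hHrow : ∀ j, H 0 j = ((1 / Real.sqrt N : ℝ) : ℂ))
    (hHcol : ∀ i, H i 0 = ((1 / Real.sqrt N : ℝ) : ℂ))
    (hequiv : HadamardEquivalent (stdHadamard N) H) :
    ∃ π ρ : Equiv.Perm (Fin N), ∀ i j, H i j = stdHadamard N (π i) (ρ j) := by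
  obtain ⟨π, ρ, c, d, hc, hd, hmat⟩ := hequiv
  set s : ℂ := ((1 / Real.sqrt N : ℝ) : ℂ) with hs
  have hNpos : (0 : ℝ) < N := Nat.cast_pos.mpr (Nat.pos_of_ne_zero (NeZero.ne N))
  have hsne : s ≠ 0 := by
    simp only [hs, Complex.ofReal_ne_zero]
    positivity
  set A : Fin N → Fin N → ℤ := fun i j => ((π i).val : ℤ) * ((ρ j).val : ℤ) with hA
  -- row/column conditions
  have hrow : ∀ j, c 0 * d j * auxE N (A 0 j) = 1 := by
    intro j
    have h := hmat 0 j
    rw [hHrow j, stdHadamard_eq] at h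
    have : s * 1 = s * (c 0 * d j * auxE N (A 0 j)) := by
      calc s * 1 = s := mul_one s
        _ = c 0 * d j * (s * auxE N (A 0 j)) := h
        _ = s * (c 0 * d j * auxE N (A 0 j)) := by ring
    exact (mul_left_cancel₀ hsne this).symm
  have hcol : ∀ i, c i * d 0 * auxE N (A i 0) = 1 := by
    intro i
    have h := hmat i 0
    rw [hHcol i, stdHadamard_eq] at h
    have : s * 1 = s * (c i * d 0 * auxE N (A i 0)) := by
      calc s * 1 = s := mul_one s
        _ = c i * d 0 * (s * auxE N (A i 0)) := h
        _ = s * (c i * d 0 * auxE N (A i 0)) := by ring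
    exact (mul_left_cancel₀ hsne this).symm
  -- explicit values of products
  have hcd0 : ∀ j, c 0 * d j = auxE N (-(A 0 j)) := by
    intro j
    have := hrow j
    calc c 0 * d j = c 0 * d j * (auxE N (A 0 j) * auxE N (-(A 0 j))) := by
          rw [auxE_mul_neg, mul_one]
      _ = (c 0 * d j * auxE N (A 0 j)) * auxE N (-(A 0 j)) := by ring
      _ = auxE N (-(A 0 j)) := by rw [this, one_mul]
  have hc0d : ∀ i, c i * d 0 = auxE N (-(A i 0)) := by
    intro i
    have := hcol i
    calc c i * d 0 = c i * d 0 * (auxE N (A i 0) * auxE N (-(A i 0))) := by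
          rw [auxE_mul_neg, mul_one]
      _ = (c i * d 0 * auxE N (A i 0)) * auxE N (-(A i 0)) := by ring
      _ = auxE N (-(A i 0)) := by rw [this, one_mul]
  have hc0ne : c 0 ≠ 0 := by
    intro h; have := hc 0; rw [h] at this; simp at this
  have hd0ne : d 0 ≠ 0 := by
    intro h; have := hd 0; rw [h] at this; simp at this
  have hcd : ∀ i j, c i * d j = auxE N (A 0 0 - A i 0 - A 0 j) := by
    intro i j
    have key : (c i * d j) * (c 0 * d 0) = (c i * d 0) * (c 0 * d j) := by ring
    have h2 : (c i * d j) * auxE N (-(A 0 0)) = auxE N (-(A i 0)) * auxE N (-(A 0 j)) := by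
      rw [← hc0d 0, key, hc0d i, hcd0 j]
    have h3 : (c i * d j) * (auxE N (-(A 0 0)) * auxE N (A 0 0))
        = auxE N (-(A i 0)) * auxE N (-(A 0 j)) * auxE N (A 0 0) := by
      rw [← mul_assoc, h2]
    rw [mul_comm (auxE N (-(A 0 0))) (auxE N (A 0 0)), auxE_mul_neg, mul_one] at h3
    rw [h3, ← auxE_add, ← auxE_add]
    congr 1
    ring
  refine ⟨π.trans (Equiv.subRight (π 0)), ρ.trans (Equiv.subRight (ρ 0)), fun i j => ?_⟩
  have hstd : stdHadamard N (π i - π 0) (ρ j - ρ 0)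
      = s * auxE N (A i j + (A 0 0 - A i 0 - A 0 j)) := by
    rw [stdHadamard_eq]
    congr 1
    apply auxE_congr
    have h1 := fin_sub_modEq N (π i) (π 0)
    have h2 := fin_sub_modEq N (ρ j) (ρ 0)
    have h3 := h1.mul h2
    refine h3.trans ?_
    have : (((π i).val : ℤ) - (π 0).val) * (((ρ j).val : ℤ) - (ρ 0).val)
        = A i j + (A 0 0 - A i 0 - A 0 j) := by
      simp only [hA]; ring
    rw [this]
  simp only [Equiv.trans_apply, Equiv.subRight_apply]
  rw [hstd, hmat i j, stdHadamard_eq, hcd i j, ← hs, auxE_add]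
  ring
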